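/- Exact expression for one telescoping term: for 2 ≤ i ≤ k, every t ∈ (A_{i−1}, A_i], and P(B_{i−1}) > 0, one has P[T^{M^{i−1}} > t] − P[T^{M^i} > t] = P( B_{i−1} ∩ {sup_{A_{i−1}<s≤t} R_s > l^i_{A_i}} ) − P( B_{i−1} ∩ {sup_{A_{i−1}<s≤t} R_s > l^{i−1}_{A_i}} ), i.e. it equals P(B_{i−1}) · [ ψ_{A_{i−1}}( l^i_{A_i}, t | B_{i−1} ) − ψ_{A_{i−1}}( l^{i−1}_{A_i}, t | B_{i−1} ) ], where ψ_a(v, t | B) := P[ sup_{a<s≤t} R_s > v | B ]. -/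

import Mathlib

open MeasureTheory ProbabilityTheory Set

noncomputable section

/-- The net outgo process `R` of a Cramér–Lundberg model (compound Poisson minus linear
premium): `R 0 = 0`, càdlàg (right-continuous) paths, stationary independent increments,
each `R t` measurable. -/
structure CLProcess (Ω : Type) [MeasurableSpace Ω] (P : Measure Ω) where
  R : ℝ → Ω → ℝ
  meas : ∀ t, Measurable (R t)
  zero : ∀ ω, R 0 ω = 0
  cadlag : ∀ ω t, ContinuousWithinAt (fun s => R s ω) (Set.Ici t) t
  indep_incr : ∀ a : ℝ, 0 ≤ a →
    IndepFun (fun ω (s : ℝ) => R (a + s) ω - R a ω)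
      (fun ω (s : Set.Icc (0:ℝ) a) => R s.1 ω) P
  stat_incr : ∀ a : ℝ, 0 ≤ a →
    P.map (fun ω (s : ℝ) => R (a + s) ω - R a ω) = P.map (fun ω (s : ℝ) => R s ω)

variable {Ω : Type} [MeasurableSpace Ω]

/-- infinite-horizon ruin probability `ψ(u) = P[sup_{t>0} R_t > u]` -/
def psiInf (P : Measure Ω) (M : CLProcess Ω P) (u : ℝ) : ℝ :=
  (P {ω | ∃ t ∈ Set.Ioi (0:ℝ), M.R t ω > u}).toReal

/-- infinite-horizon survival probability `ψ̄(u) = 1 − ψ(u)` -/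
def psiBarInf (P : Measure Ω) (M : CLProcess Ω P) (u : ℝ) : ℝ := 1 - psiInf P M u

/-- finite-horizon ruin probability `ψ(u,t) = P[sup_{0<s≤t} R_s > u]` -/
def psiFin (P : Measure Ω) (M : CLProcess Ω P) (u t : ℝ) : ℝ :=
  (P {ω | ∃ s ∈ Set.Ioc (0:ℝ) t, M.R s ω > u}).toReal

/-- finite-horizon survival probability `ψ̄(u,t) = 1 − ψ(u,t)` -/
def psiBarFin (P : Measure Ω) (M : CLProcess Ω P) (u t : ℝ) : ℝ := 1 - psiFin P M u t

/-- Capital level `l^i_t` of the comparison model `M^i`: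
`l^i_t = Σ_{j=0}^m u_j` if `t ∈ (A_m, A_{m+1}]` for some `m < i` (equivalently `t ≤ A_i`,
where `m` is the largest index with `A_m < t`), and
`l^i_t = Σ_{j=0}^i u_j + Σ_{j=i+1}^k u_j·e^{−r(A_j−A_i)}` for `t > A_i`
(with the convention `A_{k+1} = ∞`). -/
def lvl (A u : ℕ → ℝ) (r : ℝ) (k i : ℕ) (t : ℝ) : ℝ :=
  if A i < t then
    (∑ j ∈ Finset.range (i + 1), u j)
      + ∑ j ∈ Finset.Icc (i + 1) k, u j * Real.exp (-(r * (A j - A i)))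
  else
    ∑ j ∈ Finset.range (((Finset.range (k + 1)).filter (fun m => A m < t)).card), u j

/-- `P[T^{M^i} ≤ t]`: finite-time ruin probability of the comparison model `M^i`,
whose ruin time is `T^{M^i} = inf{t>0 : R_t > l^i_t}`. -/
def modelRuin (P : Measure Ω) (M : CLProcess Ω P) (A u : ℕ → ℝ) (r : ℝ) (k i : ℕ)
    (t : ℝ) : ℝ :=
  (P {ω | ∃ s ∈ Set.Ioc (0:ℝ) t, M.R s ω > lvl A u r k i s}).toReal

/-- `Δ(t) := P[T^{M^k} ≤ t] − P[T^{M_r} ≤ t]`, where `M_r = M^0` is the no-alarm model. -/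
def Delta (P : Measure Ω) (M : CLProcess Ω P) (A u : ℕ → ℝ) (r : ℝ) (k : ℕ) (t : ℝ) : ℝ :=
  modelRuin P M A u r k k t - modelRuin P M A u r k 0 t

/-- `P[T^{M^i} > t]`: finite-time survival probability of the comparison model `M^i`. -/
def modelSurv (P : Measure Ω) (M : CLProcess Ω P) (A u : ℕ → ℝ) (r : ℝ) (k i : ℕ)
    (t : ℝ) : ℝ :=
  (P {ω | ∀ s ∈ Set.Ioc (0:ℝ) t, M.R s ω ≤ lvl A u r k i s}).toReal

/-- `B_i := {T^{M^k} > A_i}`, the event of no ruin up to `A_i` under the alarm system. -/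
def Bset (P : Measure Ω) (M : CLProcess Ω P) (A u : ℕ → ℝ) (r : ℝ) (k i : ℕ) : Set Ω :=
  {ω | ∀ s ∈ Set.Ioc (0:ℝ) (A i), M.R s ω ≤ lvl A u r k k s}

/-- Auxiliary: the exceedance event over a left-open interval, for a function `f` that is
right-locally-constant off a countable set `J`, equals a countable union. -/
lemma exceed_eq_biUnion (R : ℝ → Ω → ℝ)
    (hR : ∀ ω s, ContinuousWithinAt (fun u => R u ω) (Set.Ici s) s)
    (f : ℝ → ℝ) (a t : ℝ) (hat : a < t) (J : Set ℝ)
    (hf : ∀ s ∈ Set.Ioo a t, s ∉ J → ∃ ε > 0, ∀ q ∈ Set.Ico s (s + ε), f q = f s) :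
    {ω | ∃ s ∈ Set.Ioc a t, R s ω > f s}
      = ⋃ s ∈ insert t (Set.Ioc a t ∩ (J ∪ Set.range ((↑) : ℚ → ℝ))),
          {ω | R s ω > f s} := by
  ext ω
  simp only [Set.mem_setOf_eq, Set.mem_iUnion, exists_prop]
  constructor
  · rintro ⟨s, hs, hgt⟩
    by_cases hst : s = t
    · exact ⟨t, Set.mem_insert _ _, hst ▸ hgt⟩
    by_cases hsJ : s ∈ J
    · exact ⟨s, Set.mem_insert_of_mem _ ⟨hs, Or.inl hsJ⟩, hgt⟩
    · have hslt : s < t := lt_of_le_of_ne hs.2 hst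
      obtain ⟨ε, hε, hconst⟩ := hf s ⟨hs.1, hslt⟩ hsJ
      have h1 : ∀ᶠ q in nhdsWithin s (Set.Ici s), f s < R q ω :=
        (hR ω s).eventually (eventually_gt_nhds hgt)
      obtain ⟨w, hw, hsub⟩ := mem_nhdsGE_iff_exists_Ico_subset.mp h1
      have hw' : s < w := hw
      have hb : s < min w (min (s + ε) t) :=
        lt_min hw' (lt_min (by linarith) hslt)
      obtain ⟨q, hq1, hq2⟩ := exists_rat_btwn hb
      have hq2' : (q : ℝ) < w := lt_of_lt_of_le hq2 (min_le_left _ _)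
      have hq2'' : (q : ℝ) < s + ε :=
        lt_of_lt_of_le hq2 ((min_le_right _ _).trans (min_le_left _ _))
      have hq2''' : (q : ℝ) < t :=
        lt_of_lt_of_le hq2 ((min_le_right _ _).trans (min_le_right _ _))
      refine ⟨(q : ℝ), Set.mem_insert_of_mem _
        ⟨⟨hs.1.trans hq1, hq2'''.le⟩, Or.inr ⟨q, rfl⟩⟩, ?_⟩
      have hfq : f q = f s := hconst _ ⟨hq1.le, hq2''⟩
      have : f s < R q ω := hsub ⟨hq1.le, hq2'⟩
      rw [hfq]; exact this
  · rintro ⟨s, hsD, hgt⟩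
    rcases Set.mem_insert_iff.mp hsD with h | h
    · subst h; exact ⟨s, ⟨hat, le_rfl⟩, hgt⟩
    · exact ⟨s, h.1, hgt⟩

/-- Measurability of the exceedance event. -/
lemma meas_exceed {P : Measure Ω} (M : CLProcess Ω P)
    (f : ℝ → ℝ) (a t : ℝ) (hat : a < t) (J : Set ℝ) (hJ : J.Countable)
    (hf : ∀ s ∈ Set.Ioo a t, s ∉ J → ∃ ε > 0, ∀ q ∈ Set.Ico s (s + ε), f q = f s) :
    MeasurableSet {ω | ∃ s ∈ Set.Ioc a t, M.R s ω > f s} := by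
  rw [exceed_eq_biUnion M.R M.cadlag f a t hat J hf]
  exact MeasurableSet.biUnion
    (((hJ.union (Set.countable_range _)).mono Set.inter_subset_right).insert t)
    (fun s _ => measurableSet_lt measurable_const (M.meas s))

/-- The level function is locally constant to the right off the set of alarm times. -/
lemma lvl_locally_const (A u : ℕ → ℝ) (r : ℝ) (k i : ℕ) (hik : i ≤ k) (s : ℝ)
    (hs : s ∉ Set.range A) :
    ∃ ε > 0, ∀ q ∈ Set.Ico s (s + ε), lvl A u r k i q = lvl A u r k i s := by
  classical
  set F := ((Finset.range (k + 1)).image A).filter (fun x => s < x) with hF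
  have hkey : ∃ ε > 0, ∀ q ∈ Set.Ico s (s + ε), ∀ m, m ≤ k → (A m < q ↔ A m < s) := by
    refine ⟨if h : F.Nonempty then F.min' h - s else 1, ?_, ?_⟩
    · split_ifs with h
      · have hmem := F.min'_mem h
        have h2 := Finset.mem_filter.mp hmem
        linarith [h2.2]
      · norm_num
    · intro q hq m hm
      have hne : A m ≠ s := fun h => hs ⟨m, h⟩
      rcases lt_or_gt_of_ne hne with h | h
      · exact ⟨fun _ => h, fun _ => lt_of_lt_of_le h hq.1⟩
      · have hmF : A m ∈ F := Finset.mem_filter.2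
          ⟨Finset.mem_image.2 ⟨m, Finset.mem_range.2 (by omega), rfl⟩, h⟩
        have hFne : F.Nonempty := ⟨A m, hmF⟩
        rw [dif_pos hFne] at hq
        have hmin : F.min' hFne ≤ A m := Finset.min'_le F _ hmF
        have hq2 : q < A m := by linarith [hq.2]
        exact ⟨fun h' => absurd h' (not_lt.2 hq2.le), fun h' => absurd h' (not_lt.2 h.le)⟩
  obtain ⟨ε, hε, hkey⟩ := hkey
  refine ⟨ε, hε, fun q hq => ?_⟩
  have hiff := hkey q hq
  unfold lvl
  by_cases h : A i < s
  · rw [if_pos ((hiff i hik).2 h), if_pos h]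
  · rw [if_neg (fun hc => h ((hiff i hik).1 hc)), if_neg h]
    have hfe : (Finset.range (k + 1)).filter (fun m => A m < q)
        = (Finset.range (k + 1)).filter (fun m => A m < s) :=
      Finset.filter_congr (fun m hm => hiff m (by
        rw [Finset.mem_range] at hm; omega))
    rw [hfe]

/-- Monotonicity of the alarm times. -/
lemma alarm_mono (A : ℕ → ℝ) (k : ℕ) (hAmono : ∀ i, i < k → A i < A (i + 1)) :
    ∀ m n, m ≤ n → n ≤ k → A m ≤ A n := by
  intro m n hmn hnk
  induction n with
  | zero => rw [Nat.le_zero.mp hmn]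
  | succ n ih =>
    rcases eq_or_lt_of_le hmn with rfl | h
    · exact le_rfl
    · exact (ih (by omega) (by omega)).trans (hAmono n (by omega)).le

/-- exact expression for one telescoping term. For `2 ≤ i ≤ k`,
`t ∈ (A_{i−1}, A_i]` and `P(B_{i−1}) > 0`,
`P[T^{M^{i−1}}>t] − P[T^{M^i}>t] = P(B_{i−1} ∩ {sup_{A_{i−1}<s≤t} R_s > l^i_{A_i}})`
`− P(B_{i−1} ∩ {sup_{A_{i−1}<s≤t} R_s > l^{i−1}_{A_i}})`
`= P(B_{i−1})·[ψ_{A_{i−1}}(l^i_{A_i}, t | B_{i−1}) − ψ_{A_{i−1}}(l^{i−1}_{A_i}, t | B_{i−1})]`. -/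
theorem telescoping_term_exact
    (P : Measure Ω) [IsProbabilityMeasure P] (M : CLProcess Ω P)
    (A u : ℕ → ℝ) (r : ℝ) (k : ℕ) (hk : 1 ≤ k)
    (hA0 : A 0 = 0) (hAmono : ∀ i, i < k → A i < A (i + 1))
    (hu : ∀ j, 0 < u j) (hr : 0 < r)
    (i : ℕ) (hi2 : 2 ≤ i) (hik : i ≤ k)
    (t : ℝ) (ht1 : A (i - 1) < t) (ht2 : t ≤ A i)
    (hPB : 0 < P (Bset P M A u r k (i - 1))) :
    modelSurv P M A u r k (i - 1) t - modelSurv P M A u r k i t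
        = (P (Bset P M A u r k (i - 1)
            ∩ {ω | ∃ s ∈ Set.Ioc (A (i - 1)) t, M.R s ω > lvl A u r k i (A i)})).toReal
          - (P (Bset P M A u r k (i - 1)
            ∩ {ω | ∃ s ∈ Set.Ioc (A (i - 1)) t,
                M.R s ω > lvl A u r k (i - 1) (A i)})).toReal
    ∧ modelSurv P M A u r k (i - 1) t - modelSurv P M A u r k i t
        = (P (Bset P M A u r k (i - 1))).toReal
          * (((ProbabilityTheory.cond P (Bset P M A u r k (i - 1)))
                {ω | ∃ s ∈ Set.Ioc (A (i - 1)) t, M.R s ω > lvl A u r k i (A i)}).toReal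
             - ((ProbabilityTheory.cond P (Bset P M A u r k (i - 1)))
                {ω | ∃ s ∈ Set.Ioc (A (i - 1)) t,
                  M.R s ω > lvl A u r k (i - 1) (A i)}).toReal) := by
  classical
  have hmono : ∀ m n, m ≤ n → n ≤ k → A m ≤ A n := alarm_mono A k hAmono
  have hi1 : i - 1 + 1 = i := by omega
  have haAi : A (i - 1) < A i := by
    have h := hAmono (i - 1) (by omega); rwa [hi1] at h
  have h0a : 0 < A (i - 1) := by
    have h01 : A 0 < A 1 := hAmono 0 (by omega)
    have h1 : A 1 ≤ A (i - 1) := hmono 1 (i - 1) (by omega) (by omega)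
    rw [← hA0]; linarith
  have hAik : A i ≤ A k := hmono i k hik le_rfl
  -- index characterization on (A (i-1), A i]
  have hidx : ∀ s, A (i - 1) < s → s ≤ A i → ∀ m, m ≤ k → (A m < s ↔ m < i) := by
    intro s hs1 hs2 m hm
    constructor
    · intro h
      by_contra hmi
      push_neg at hmi
      have : A i ≤ A m := hmono i m hmi hm
      linarith
    · intro h
      have : A m ≤ A (i - 1) := hmono m (i - 1) (by omega) (by omega)
      linarith
  have hcard : ∀ s, A (i - 1) < s → s ≤ A i →
      ((Finset.range (k + 1)).filter (fun m => A m < s)).card = i := by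
    intro s h1 h2
    have hfe : (Finset.range (k + 1)).filter (fun m => A m < s) = Finset.range i := by
      ext m
      simp only [Finset.mem_filter, Finset.mem_range]
      constructor
      · rintro ⟨hm, h⟩; exact (hidx s h1 h2 m (by omega)).1 h
      · intro hm; exact ⟨by omega, (hidx s h1 h2 m (by omega)).2 hm⟩
    rw [hfe, Finset.card_range]
  -- level values
  have hlvl_i : ∀ s, A (i - 1) < s → s ≤ t → lvl A u r k i s = lvl A u r k i (A i) := by
    intro s h1 h2
    unfold lvl
    rw [if_neg (by push_neg; linarith : ¬ A i < s), if_neg (lt_irrefl (A i)),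
      hcard s h1 (h2.trans ht2), hcard (A i) haAi le_rfl]
  have hlvl_i1 : ∀ s, A (i - 1) < s → lvl A u r k (i - 1) s = lvl A u r k (i - 1) (A i) := by
    intro s h1
    unfold lvl
    rw [if_pos h1, if_pos haAi]
  have hlow : ∀ s, s ≤ A (i - 1) →
      lvl A u r k (i - 1) s = lvl A u r k k s ∧ lvl A u r k i s = lvl A u r k k s := by
    intro s hsa
    have h1 : ¬ A (i - 1) < s := not_lt.2 hsa
    have h2 : ¬ A i < s := not_lt.2 (by linarith)
    have h3 : ¬ A k < s := not_lt.2 (by linarith)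
    unfold lvl
    rw [if_neg h1, if_neg h2, if_neg h3]
    exact ⟨rfl, rfl⟩
  set B := Bset P M A u r k (i - 1) with hBdef
  set E1 := {ω | ∃ s ∈ Set.Ioc (A (i - 1)) t, M.R s ω > lvl A u r k i (A i)} with hE1def
  set E2 := {ω | ∃ s ∈ Set.Ioc (A (i - 1)) t, M.R s ω > lvl A u r k (i - 1) (A i)}
    with hE2def
  -- measurability
  have hE1m : MeasurableSet E1 :=
    meas_exceed M (fun _ => lvl A u r k i (A i)) (A (i - 1)) t ht1 ∅
      Set.countable_empty (fun s _ _ => ⟨1, one_pos, fun _ _ => rfl⟩)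
  have hE2m : MeasurableSet E2 :=
    meas_exceed M (fun _ => lvl A u r k (i - 1) (A i)) (A (i - 1)) t ht1 ∅
      Set.countable_empty (fun s _ _ => ⟨1, one_pos, fun _ _ => rfl⟩)
  have hBm : MeasurableSet B := by
    have hBc : B = {ω | ∃ s ∈ Set.Ioc (0 : ℝ) (A (i - 1)), M.R s ω > lvl A u r k k s}ᶜ := by
      ext ω
      simp only [hBdef, Bset, Set.mem_setOf_eq, Set.mem_compl_iff]
      constructor
      · intro H hmem
        obtain ⟨s, hs, hgt⟩ := hmem
        exact absurd (H s hs) (not_le.2 hgt)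
      · intro H s hs
        by_contra hc
        exact H ⟨s, hs, not_le.1 hc⟩
    rw [hBc]
    exact (meas_exceed M (lvl A u r k k) 0 (A (i - 1)) h0a (Set.range A)
      (Set.countable_range A)
      (fun s _ hsJ => lvl_locally_const A u r k k le_rfl s hsJ)).compl
  -- survival sets
  have hsurv : ∀ j : ℕ, (j = i - 1 ∨ j = i) → j ≤ k → (∀ s, A (i - 1) < s → s ≤ t →
        lvl A u r k j s = lvl A u r k j (A i)) →
      {ω | ∀ s ∈ Set.Ioc (0 : ℝ) t, M.R s ω ≤ lvl A u r k j s}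
        = B ∩ {ω | ∃ s ∈ Set.Ioc (A (i - 1)) t, M.R s ω > lvl A u r k j (A i)}ᶜ := by
    intro j hjcase hjk hj
    have hjlow : ∀ s, 0 < s → s ≤ A (i - 1) → lvl A u r k j s = lvl A u r k k s := by
      intro s _ hsa
      have h3 : ¬ A k < s := not_lt.2 (by linarith)
      have h1 : ¬ A j < s := by
        rcases hjcase with rfl | rfl
        · exact not_lt.2 hsa
        · exact not_lt.2 (by linarith)
      unfold lvl; rw [if_neg h1, if_neg h3]
    ext ω
    simp only [Set.mem_setOf_eq, Set.mem_inter_iff, Set.mem_compl_iff, hBdef, Bset,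
      Set.mem_Ioc]
    constructor
    · intro H
      refine ⟨fun s hs => ?_, fun hmem => ?_⟩
      · rw [← hjlow s hs.1 hs.2]
        exact H s ⟨hs.1, hs.2.trans ht1.le⟩
      · obtain ⟨s, hs, hgt⟩ := hmem
        have hle := H s ⟨h0a.trans hs.1, hs.2⟩
        rw [hj s hs.1 hs.2] at hle
        exact absurd hle (not_le.2 hgt)
    · rintro ⟨hB, hE⟩ s hs
      rcases le_or_gt s (A (i - 1)) with h | h
      · rw [hjlow s hs.1 h]
        exact hB s ⟨hs.1, h⟩
      · rw [hj s h hs.2]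
        by_contra hc
        exact hE ⟨s, ⟨h, hs.2⟩, not_le.1 hc⟩
  have hs1 : modelSurv P M A u r k (i - 1) t = (P (B ∩ E2ᶜ)).toReal := by
    rw [modelSurv, hsurv (i - 1) (Or.inl rfl) (by omega) (fun s h1 _ => hlvl_i1 s h1)]
  have hs2 : modelSurv P M A u r k i t = (P (B ∩ E1ᶜ)).toReal := by
    rw [modelSurv, hsurv i (Or.inr rfl) hik hlvl_i]
  -- measure arithmetic
  have hsplit : ∀ E : Set Ω, MeasurableSet E →
      (P (B ∩ Eᶜ)).toReal = (P B).toReal - (P (B ∩ E)).toReal := by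
    intro E hE
    have h := measure_inter_add_diff (μ := P) B hE
    rw [Set.diff_eq] at h
    have h' := congrArg ENNReal.toReal h
    rw [ENNReal.toReal_add (measure_ne_top P _) (measure_ne_top P _)] at h'
    linarith
  have hdiff : modelSurv P M A u r k (i - 1) t - modelSurv P M A u r k i t
      = (P (B ∩ E1)).toReal - (P (B ∩ E2)).toReal := by
    rw [hs1, hs2, hsplit E2 hE2m, hsplit E1 hE1m]
    ring
  refine ⟨hdiff, ?_⟩
  rw [hdiff]
  have hx : 0 < (P B).toReal := ENNReal.toReal_pos (ne_of_gt hPB) (measure_ne_top P _)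
  have hcond : ∀ E : Set Ω, ((ProbabilityTheory.cond P B) E).toReal
      = ((P B).toReal)⁻¹ * (P (B ∩ E)).toReal := by
    intro E
    rw [ProbabilityTheory.cond_apply hBm P E, ENNReal.toReal_mul, ENNReal.toReal_inv]
  rw [hcond E1, hcond E2]
  field_simp
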